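/- If ω is a nonsingular balanced 1-cocycle on a finite connected graph Γ, then ω(e) = 0 if and only if the edge {e, ē} is a separating edge of Γ. -/

import Mathlib

open Finset

/-- A finite graph: vertices, half-edges with a free involution, and a target map. -/
structure FinGraph where
  V : Type
  H : Type
  [fV : Fintype V]
  [fH : Fintype H]
  [dV : DecidableEq V]
  [dH : DecidableEq H]
  bar : H → H
  bar_invol : ∀ e, bar (bar e) = e
  bar_ne : ∀ e, bar e ≠ e
  tar : H → V

attribute [instance] FinGraph.fV FinGraph.fH FinGraph.dV FinGraph.dH

namespace FinGraph

variable (G : FinGraph)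

/-- The source of a half-edge is the target of its other half. -/
def src (e : G.H) : G.V := G.tar (G.bar e)

/-- One step along a half-edge belonging to the allowed set `A`. -/
def Step (A : Set G.H) (v w : G.V) : Prop := ∃ e, e ∈ A ∧ G.src e = v ∧ G.tar e = w

/-- Reachability using only half-edges in `A`. -/
def ReachIn (A : Set G.H) (v w : G.V) : Prop := Relation.ReflTransGen (G.Step A) v w

/-- The graph is connected. -/
def Connected : Prop := ∀ v w : G.V, G.ReachIn Set.univ v w

/-- The valence of a vertex: the number of half-edges incident to it. -/
def valence (v : G.V) : ℕ := (univ.filter (fun e => G.tar e = v)).card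

/-- An edge `{e, ē}` is separating if deleting it disconnects the graph. -/
def IsSeparating (e : G.H) : Prop :=
  ¬ ∀ v w : G.V, G.ReachIn {h | h ≠ e ∧ h ≠ G.bar e} v w

/-- The graph has first Betti number (rank) `n`; for a connected graph this
says `#edges = #vertices + n - 1`, i.e. `#H + 2 = 2(#V + n)`. -/
def HasRank (n : ℕ) : Prop := Fintype.card G.H + 2 = 2 * (Fintype.card G.V + n)

end FinGraph

namespace FinGraph

variable (G : FinGraph)

/-- A balanced 1-cocycle with values in an additive group. -/
def IsBalanced {W : Type*} [AddCommGroup W] (ω : G.H → W) : Prop :=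
  (∀ e, ω (G.bar e) = - ω e) ∧
  ∀ v : G.V, ∑ e ∈ univ.filter (fun e => G.tar e = v), ω e = 0

/-- The space `Ω¹(Γ, V)` of balanced `V`-valued 1-cocycles. -/
def Omega (W : Type*) [AddCommGroup W] [Module ℝ W] : Submodule ℝ (G.H → W) where
  carrier := {ω | G.IsBalanced ω}
  zero_mem' := ⟨fun e => by simp, fun v => by simp⟩
  add_mem' := by
    intro a b ha hb
    refine ⟨fun e => ?_, fun v => ?_⟩
    · simp only [Pi.add_apply, ha.1 e, hb.1 e]; abel
    · simp only [Pi.add_apply, Finset.sum_add_distrib, ha.2 v, hb.2 v, add_zero]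
  smul_mem' := by
    intro r a ha
    refine ⟨fun e => ?_, fun v => ?_⟩
    · simp only [Pi.smul_apply, ha.1 e, smul_neg]
    · simp only [Pi.smul_apply, ← Finset.smul_sum, ha.2 v, smul_zero]

/-- The group of 1-cycles (the model for `H₁(Γ)`): antisymmetric integer functions
on half-edges with vanishing vertex sums. -/
def cycles : AddSubgroup (G.H → ℤ) where
  carrier := {c | G.IsBalanced c}
  zero_mem' := ⟨fun e => by simp, fun v => by simp⟩
  add_mem' := by
    intro a b ha hb
    refine ⟨fun e => ?_, fun v => ?_⟩
    · simp only [Pi.add_apply, ha.1 e, hb.1 e]; abel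
    · simp only [Pi.add_apply, Finset.sum_add_distrib, ha.2 v, hb.2 v, add_zero]
  neg_mem' := by
    intro a ha
    refine ⟨fun e => ?_, fun v => ?_⟩
    · simp only [Pi.neg_apply, ha.1 e]
    · simp only [Pi.neg_apply, Finset.sum_neg_distrib, ha.2 v, neg_zero]

/-- A spanning (maximal) tree, given as a `bar`-closed set of half-edges. -/
def IsSpanningTree (S : Finset G.H) : Prop :=
  (∀ e ∈ S, G.bar e ∈ S) ∧ (∀ v w : G.V, G.ReachIn ↑S v w) ∧
    S.card + 2 = 2 * Fintype.card G.V

/-- `es` is a choice of one half-edge from each of the `r` edges not in `S`. -/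
def IsComplement (S : Finset G.H) {r : ℕ} (es : Fin r → G.H) : Prop :=
  (∀ i, es i ∉ S) ∧ ∀ e ∉ S, ∃! i, e = es i ∨ e = G.bar (es i)

/-- `ω` is nonsingular: its values span an `r`-dimensional subspace. -/
def Nonsingular {W : Type*} [AddCommGroup W] [Module ℝ W] (ω : G.H → W) (r : ℕ) : Prop :=
  Module.finrank ℝ ↥(Submodule.span ℝ (Set.range ω)) = r

/-- A length function on the graph. -/
def IsLengthFunction (lam : G.H → ℝ) : Prop :=
  (∀ e, 0 ≤ lam e ∧ lam e ≤ 1/2) ∧ (∀ e, lam (G.bar e) = lam e) ∧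
    ∀ c ∈ G.cycles, c ≠ 0 → ∃ e, c e ≠ 0 ∧ lam e = 1/2

end FinGraph


namespace FinGraph

variable (G : FinGraph)

lemma bar_injective : Function.Injective G.bar := by
  intro a b h
  have := congrArg G.bar h
  rwa [G.bar_invol, G.bar_invol] at this

lemma src_bar (e : G.H) : G.src (G.bar e) = G.tar e := by
  simp [src, G.bar_invol]

lemma tar_bar (e : G.H) : G.tar (G.bar e) = G.src e := rfl

lemma reach_symm {A : Set G.H} (hA : ∀ h ∈ A, G.bar h ∈ A) {v w : G.V}
    (h : G.ReachIn A v w) : G.ReachIn A w v := by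
  induction h with
  | refl => exact Relation.ReflTransGen.refl
  | tail _ hs ih =>
    rcases hs with ⟨f, hf, hsrc, htar⟩
    refine Relation.ReflTransGen.trans
      (Relation.ReflTransGen.single ⟨G.bar f, hA f hf, ?_, ?_⟩) ih
    · rw [G.src_bar, htar]
    · rw [G.tar_bar, hsrc]

def pathLen (G : FinGraph) : ℕ → G.V → G.V → Prop
  | 0, v, w => v = w
  | n+1, v, w => ∃ u, G.pathLen n v u ∧ G.Step Set.univ u w

lemma reach_pathLen {v w : G.V} (h : G.ReachIn Set.univ v w) : ∃ n, G.pathLen n v w := by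
  induction h with
  | refl => exact ⟨0, rfl⟩
  | tail _ hs ih =>
    rcases ih with ⟨n, hn⟩
    exact ⟨n+1, _, hn, hs⟩

lemma exists_tree (v₀ : G.V) (hconn : G.Connected) :
    ∃ (te : {v : G.V // v ≠ v₀} → G.H) (d : G.V → ℕ),
      (∀ v, G.tar (te v) = v.1) ∧ (∀ v, d (G.src (te v)) < d v.1) := by
  classical
  have hex : ∀ v : G.V, ∃ n, G.pathLen n v₀ v := fun v => G.reach_pathLen (hconn v₀ v)
  set d : G.V → ℕ := fun v => Nat.find (hex v) with hd
  have key : ∀ v : {v : G.V // v ≠ v₀}, ∃ h, G.tar h = v.1 ∧ d (G.src h) < d v.1 := by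
    rintro ⟨v, hv⟩
    have hspec : G.pathLen (d v) v₀ v := Nat.find_spec (hex v)
    rcases hdv : d v with _ | m
    · rw [hdv] at hspec
      simp only [pathLen] at hspec
      exact absurd hspec.symm hv
    · rw [hdv] at hspec
      rcases hspec with ⟨u, hu, f, _, hsrc, htar⟩
      refine ⟨f, htar, ?_⟩
      rw [hsrc]
      exact Nat.lt_succ_of_le (Nat.find_le hu)
  exact ⟨fun v => Classical.choose (key v), d, fun v => (Classical.choose_spec (key v)).1,
    fun v => (Classical.choose_spec (key v)).2⟩

lemma exists_T (v₀ : G.V) (hconn : G.Connected) :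
    ∃ (te : {v : G.V // v ≠ v₀} → G.H) (d : G.V → ℕ) (T : Finset G.H),
      (∀ v, G.tar (te v) = v.1) ∧ (∀ v, d (G.src (te v)) < d v.1) ∧
      (∀ h, h ∈ T ↔ ∃ v, h = te v ∨ h = G.bar (te v)) ∧
      T.card = 2 * (Fintype.card G.V - 1) := by
  classical
  obtain ⟨te, d, htar, hdlt⟩ := G.exists_tree v₀ hconn
  have hte_inj : Function.Injective te := by
    intro v w h
    apply Subtype.ext
    rw [← htar v, ← htar w, h]
  have hmix : ∀ v w, te v ≠ G.bar (te w) := by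
    intro v w hc
    have h1 : G.src (te w) = v.1 := by rw [← G.tar_bar, ← hc, htar]
    have h2 : G.src (te v) = w.1 := by
      rw [src, hc, G.bar_invol, htar]
    have l1 : d v.1 < d w.1 := h1 ▸ hdlt w
    have l2 : d w.1 < d v.1 := h2 ▸ hdlt v
    omega
  set T : Finset G.H :=
    (Finset.univ.image te) ∪ (Finset.univ.image (fun v => G.bar (te v))) with hT
  have hmem : ∀ h, h ∈ T ↔ ∃ v, h = te v ∨ h = G.bar (te v) := by
    intro h
    simp only [hT, Finset.mem_union, Finset.mem_image, Finset.mem_univ, true_and]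
    constructor
    · rintro (⟨v, rfl⟩ | ⟨v, rfl⟩)
      · exact ⟨v, Or.inl rfl⟩
      · exact ⟨v, Or.inr rfl⟩
    · rintro ⟨v, rfl | rfl⟩
      · exact Or.inl ⟨v, rfl⟩
      · exact Or.inr ⟨v, rfl⟩
  refine ⟨te, d, T, htar, hdlt, hmem, ?_⟩
  have hdisj : Disjoint (Finset.univ.image te)
      (Finset.univ.image (fun v => G.bar (te v))) := by
    rw [Finset.disjoint_left]
    rintro a ha hb
    rcases Finset.mem_image.1 ha with ⟨v, _, rfl⟩
    rcases Finset.mem_image.1 hb with ⟨w, _, hw⟩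
    exact hmix v w hw.symm
  have hbar_inj : Function.Injective (fun v => G.bar (te v)) :=
    fun a b h => hte_inj (G.bar_injective h)
  have hcards : Fintype.card {v : G.V // v ≠ v₀} = Fintype.card G.V - 1 := by
    rw [Fintype.card_subtype]
    rw [show Finset.univ.filter (fun v : G.V => v ≠ v₀) = Finset.univ.erase v₀ from
      Finset.filter_ne' _ _]
    rw [Finset.card_erase_of_mem (Finset.mem_univ _), Finset.card_univ]
  have hVpos : 1 ≤ Fintype.card G.V := Fintype.card_pos_iff.2 ⟨v₀⟩
  rw [hT, Finset.card_union_of_disjoint hdisj,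
    Finset.card_image_of_injective _ hte_inj,
    Finset.card_image_of_injective _ hbar_inj, Finset.card_univ, hcards]
  omega

lemma treebound (hconn : G.Connected) : 2 * Fintype.card G.V ≤ Fintype.card G.H + 2 := by
  classical
  rcases isEmpty_or_nonempty G.V with hV | ⟨⟨v₀⟩⟩
  · rw [Fintype.card_eq_zero]
    omega
  · obtain ⟨te, d, T, _, _, _, hTcard⟩ := G.exists_T v₀ hconn
    have h1 : T.card ≤ Fintype.card G.H := by
      rw [← Finset.card_univ]
      exact Finset.card_le_card (Finset.subset_univ T)
    have h2 : 1 ≤ Fintype.card G.V := Fintype.card_pos_iff.2 ⟨v₀⟩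
    omega

lemma pick_orientation : ∀ S : Finset G.H, (∀ h ∈ S, G.bar h ∈ S) →
    ∃ C : Finset G.H, C ⊆ S ∧ 2 * C.card = S.card ∧ ∀ h ∈ S, h ∈ C ∨ G.bar h ∈ C := by
  classical
  intro S
  induction S using Finset.strongInduction with
  | _ S ih =>
    intro hS
    rcases S.eq_empty_or_nonempty with rfl | ⟨s, hs⟩
    · exact ⟨∅, by simp, by simp, by simp⟩
    · have hbs : G.bar s ∈ S := hS s hs
      have hbne : G.bar s ≠ s := G.bar_ne s
      set S' := (S.erase s).erase (G.bar s) with hS'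
      have hsub : S' ⊆ S := (Finset.erase_subset _ _).trans (Finset.erase_subset _ _)
      have hsnot : s ∉ S' := by
        intro hc
        exact (Finset.mem_erase.1 (Finset.mem_erase.1 hc).2).1 rfl
      have hssub : S' ⊂ S := Finset.ssubset_iff_of_subset hsub |>.2 ⟨s, hs, hsnot⟩
      have hS'bar : ∀ h ∈ S', G.bar h ∈ S' := by
        intro h hh
        rcases Finset.mem_erase.1 hh with ⟨hne1, hh2⟩
        rcases Finset.mem_erase.1 hh2 with ⟨hne2, hh3⟩
        refine Finset.mem_erase.2 ⟨?_, Finset.mem_erase.2 ⟨?_, hS h hh3⟩⟩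
        · intro hc; exact hne2 (G.bar_injective hc)
        · intro hc
          apply hne1
          rw [← G.bar_invol h, hc]
      obtain ⟨C, hC1, hC2, hC3⟩ := ih S' hssub hS'bar
      have hpairsub : ({s, G.bar s} : Finset G.H) ⊆ S := by
        intro x hx
        rcases Finset.mem_insert.1 hx with rfl | hx
        · exact hs
        · rw [Finset.mem_singleton.1 hx]; exact hbs
      have h2card : 2 ≤ S.card := by
        have := Finset.card_le_card hpairsub
        rwa [Finset.card_pair (Ne.symm hbne)] at this
      have hcardS' : S'.card = S.card - 2 := by
        rw [hS', Finset.card_erase_of_mem (Finset.mem_erase.2 ⟨hbne, hbs⟩),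
          Finset.card_erase_of_mem hs]
        omega
      have hsC : s ∉ C := fun hc => hsnot (hC1 hc)
      refine ⟨insert s C, ?_, ?_, ?_⟩
      · intro x hx
        rcases Finset.mem_insert.1 hx with rfl | hx
        · exact hs
        · exact hsub (hC1 hx)
      · rw [Finset.card_insert_of_notMem hsC]
        omega
      · intro h hh
        by_cases h1 : h = s
        · subst h1; exact Or.inl (Finset.mem_insert_self _ _)
        by_cases h2 : h = G.bar s
        · subst h2
          refine Or.inr ?_
          rw [G.bar_invol]
          exact Finset.mem_insert_self _ _
        · have hh' : h ∈ S' :=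
            Finset.mem_erase.2 ⟨h2, Finset.mem_erase.2 ⟨h1, hh⟩⟩
          rcases hC3 h hh' with hc | hc
          · exact Or.inl (Finset.mem_insert_of_mem hc)
          · exact Or.inr (Finset.mem_insert_of_mem hc)

lemma spanbound (hconn : G.Connected) (n : ℕ) (hrank : G.HasRank n)
    {W : Type*} [AddCommGroup W] [Module ℝ W] (ω : G.H → W) (hω : G.IsBalanced ω) :
    Module.finrank ℝ ↥(Submodule.span ℝ (Set.range ω)) ≤ n := by
  classical
  rcases isEmpty_or_nonempty G.V with hV | ⟨⟨v₀⟩⟩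
  · haveI : IsEmpty G.H := ⟨fun h => hV.false (G.tar h)⟩
    rw [Set.range_eq_empty ω, Submodule.span_empty]
    simp
  obtain ⟨te, d, T, htar, hdlt, hTmem, hTcard⟩ := G.exists_T v₀ hconn
  have hTbar : ∀ h ∈ T, G.bar h ∈ T := by
    intro h hh
    rcases (hTmem h).1 hh with ⟨v, rfl | rfl⟩
    · exact (hTmem _).2 ⟨v, Or.inr rfl⟩
    · exact (hTmem _).2 ⟨v, Or.inl (G.bar_invol (te v))⟩
  set S : Finset G.H := Finset.univ \ T with hSdef
  have hSbar : ∀ h ∈ S, G.bar h ∈ S := by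
    intro h hh
    simp only [hSdef, Finset.mem_sdiff, Finset.mem_univ, true_and] at hh ⊢
    intro hbT
    apply hh
    have := hTbar _ hbT
    rwa [G.bar_invol] at this
  obtain ⟨C, hCS, hCcard, hCcover⟩ := G.pick_orientation S hSbar
  have hScard : S.card = Fintype.card G.H - T.card := by
    rw [hSdef, Finset.card_sdiff_of_subset (Finset.subset_univ T), Finset.card_univ]
  have hV1 : 1 ≤ Fintype.card G.V := Fintype.card_pos_iff.2 ⟨v₀⟩
  have hTle : T.card ≤ Fintype.card G.H := by
    rw [← Finset.card_univ]
    exact Finset.card_le_card (Finset.subset_univ T)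
  have hr : Fintype.card G.H + 2 = 2 * (Fintype.card G.V + n) := hrank
  have hCn : C.card ≤ n := by omega
  set N : Submodule ℝ W := Submodule.span ℝ ↑(C.image ω) with hN
  have hmemS : ∀ h ∈ S, ω h ∈ N := by
    intro h hh
    rcases hCcover h hh with hC | hC
    · exact Submodule.subset_span (by simpa using Finset.mem_image_of_mem ω hC)
    · have hmem : ω (G.bar h) ∈ N :=
        Submodule.subset_span (by simpa using Finset.mem_image_of_mem ω hC)
      rw [hω.1 h] at hmem
      simpa using N.neg_mem hmem
  set D : ℕ := Finset.univ.sup d with hD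
  have hdle : ∀ v : G.V, d v ≤ D := fun v => Finset.le_sup (Finset.mem_univ v)
  have core : ∀ v : {v : G.V // v ≠ v₀},
      (∀ w : {v : G.V // v ≠ v₀}, d v.1 < d w.1 → ω (te w) ∈ N) → ω (te v) ∈ N := by
    intro v hIH
    have hmemF : te v ∈ Finset.univ.filter (fun e => G.tar e = v.1) := by
      simp [htar v]
    have heq : ω (te v)
        + ∑ x ∈ (Finset.univ.filter (fun e => G.tar e = v.1)).erase (te v), ω x = 0 := by
      rw [Finset.add_sum_erase _ ω hmemF]
      exact hω.2 v.1
    have hrest : ∑ x ∈ (Finset.univ.filter (fun e => G.tar e = v.1)).erase (te v), ω x ∈ N := by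
      refine Submodule.sum_mem N ?_
      intro h hh
      rcases Finset.mem_erase.1 hh with ⟨hne, hfil⟩
      have htarh : G.tar h = v.1 := (Finset.mem_filter.1 hfil).2
      by_cases hhS : h ∈ S
      · exact hmemS h hhS
      · have hhT : h ∈ T := by
          simp only [hSdef, Finset.mem_sdiff, Finset.mem_univ, true_and, not_not] at hhS
          exact hhS
        rcases (hTmem h).1 hhT with ⟨w, rfl | rfl⟩
        · have hwv : w = v := Subtype.ext (by rw [← htar w]; exact htarh)
          exact absurd (congrArg te hwv) hne
        · rw [G.tar_bar] at htarh
          have hlt : d v.1 < d w.1 := htarh ▸ hdlt w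
          have hmem := hIH w hlt
          rw [hω.1 (te w)]
          exact N.neg_mem hmem
    have : ω (te v) = -∑ x ∈ (Finset.univ.filter (fun e => G.tar e = v.1)).erase (te v), ω x :=
      eq_neg_of_add_eq_zero_left heq
    rw [this]
    exact N.neg_mem hrest
  have main : ∀ k, ∀ v : {v : G.V // v ≠ v₀}, D ≤ d v.1 + k → ω (te v) ∈ N := by
    intro k
    induction k with
    | zero =>
      intro v hv
      refine core v ?_
      intro w hw
      exact absurd (hdle w.1) (by omega)
    | succ k ih =>
      intro v hv
      refine core v ?_
      intro w hw
      exact ih w (by omega)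
  have hrange : ∀ h : G.H, ω h ∈ N := by
    intro h
    by_cases hhS : h ∈ S
    · exact hmemS h hhS
    · have hhT : h ∈ T := by
        simp only [hSdef, Finset.mem_sdiff, Finset.mem_univ, true_and, not_not] at hhS
        exact hhS
      rcases (hTmem h).1 hhT with ⟨w, rfl | rfl⟩
      · exact main D w (by omega)
      · rw [hω.1 (te w)]
        exact N.neg_mem (main D w (by omega))
  have hle : Submodule.span ℝ (Set.range ω) ≤ N := by
    rw [Submodule.span_le]
    rintro x ⟨h, rfl⟩
    exact hrange h
  haveI hfd : FiniteDimensional ℝ N :=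
    FiniteDimensional.span_of_finite ℝ (Finset.finite_toSet _)
  calc Module.finrank ℝ ↥(Submodule.span ℝ (Set.range ω))
      ≤ Module.finrank ℝ ↥N := Submodule.finrank_mono hle
    _ ≤ (C.image ω).card := finrank_span_finset_le_card _
    _ ≤ C.card := Finset.card_image_le
    _ ≤ n := hCn

lemma reach_avoid (e : G.H)
    (hAbar : ∀ h ∈ ({h | h ≠ e ∧ h ≠ G.bar e} : Set G.H), G.bar h ∈ ({h | h ≠ e ∧ h ≠ G.bar e} : Set G.H))
    (hr : G.ReachIn {h | h ≠ e ∧ h ≠ G.bar e} (G.tar e) (G.src e)) {v w : G.V}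
    (h : G.ReachIn Set.univ v w) : G.ReachIn {h | h ≠ e ∧ h ≠ G.bar e} v w := by
  induction h with
  | refl => exact Relation.ReflTransGen.refl
  | tail _ hs ih =>
    rcases hs with ⟨f, _, hsrc, htar⟩
    refine Relation.ReflTransGen.trans ih ?_
    by_cases hf1 : f = e
    · subst hf1
      rw [← hsrc, ← htar]
      exact G.reach_symm hAbar hr
    by_cases hf2 : f = G.bar e
    · subst hf2
      rw [← hsrc, ← htar, G.src_bar, G.tar_bar]
      exact hr
    · exact Relation.ReflTransGen.single ⟨f, ⟨hf1, hf2⟩, hsrc, htar⟩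

lemma bar_closed_avoid (e : G.H) :
    ∀ h ∈ ({h | h ≠ e ∧ h ≠ G.bar e} : Set G.H), G.bar h ∈ ({h | h ≠ e ∧ h ≠ G.bar e} : Set G.H) := by
  intro h hh
  constructor
  · intro hc
    apply hh.2
    rw [← G.bar_invol h, hc]
  · intro hc
    exact hh.1 (G.bar_injective hc)

lemma separating_vanish {W : Type*} [AddCommGroup W] [Module ℝ W]
    (hconn : G.Connected) (ω : G.H → W) (hω : G.IsBalanced ω) (e : G.H)
    (hsep : G.IsSeparating e) : ω e = 0 := by
  classical
  set A : Set G.H := {h | h ≠ e ∧ h ≠ G.bar e} with hA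
  have hAbar := G.bar_closed_avoid e
  have hns : ¬ G.ReachIn A (G.tar e) (G.src e) := by
    intro hr
    exact hsep (fun v w => G.reach_avoid e hAbar hr (hconn v w))
  set Cs : Set G.V := {u | G.ReachIn A (G.tar e) u} with hCs
  set F : Finset G.H := Finset.univ.filter (fun h => G.tar h ∈ Cs) with hF
  have hstep : ∀ h : G.H, h ∈ A → (G.tar h ∈ Cs ↔ G.src h ∈ Cs) := by
    intro h hh
    have hstep1 : G.Step A (G.src h) (G.tar h) := ⟨h, hh, rfl, rfl⟩
    constructor
    · intro ht
      exact Relation.ReflTransGen.trans ht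
        (G.reach_symm hAbar (Relation.ReflTransGen.single hstep1))
    · intro hs
      exact Relation.ReflTransGen.trans hs (Relation.ReflTransGen.single hstep1)
  have hsum0 : ∑ h ∈ F, ω h = 0 := by
    have := Finset.sum_fiberwise_eq_sum_filter Finset.univ
      (Finset.univ.filter (fun u => u ∈ Cs)) G.tar ω
    rw [show Finset.univ.filter (fun i => G.tar i ∈ Finset.univ.filter (fun u => u ∈ Cs)) = F by
      rw [hF]; apply Finset.filter_congr; intro h _; simp] at this
    rw [← this]
    refine Finset.sum_eq_zero ?_
    intro j _
    exact hω.2 j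
  have heF : e ∈ F := by
    rw [hF]
    simp only [Finset.mem_filter, Finset.mem_univ, true_and]
    exact Relation.ReflTransGen.refl
  have hbarE : G.bar e ∉ F := by
    rw [hF]
    simp only [Finset.mem_filter, Finset.mem_univ, true_and]
    rw [G.tar_bar]
    exact hns
  have hrest : ∑ x ∈ F.erase e, ω x = 0 := by
    refine Finset.sum_involution (fun a _ => G.bar a) ?_ ?_ ?_ ?_
    · intro a _
      show ω a + ω (G.bar a) = 0
      rw [hω.1 a]
      exact add_neg_cancel _
    · intro a _ _
      show G.bar a ≠ a
      exact G.bar_ne a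
    · intro a ha
      show G.bar a ∈ F.erase e
      rcases Finset.mem_erase.1 ha with ⟨hane, haF⟩
      have htarA : G.tar a ∈ Cs := by
        rw [hF] at haF
        exact (Finset.mem_filter.1 haF).2
      have habar : a ≠ G.bar e := fun hc => hbarE (hc ▸ haF)
      have haA : a ∈ A := ⟨hane, habar⟩
      refine Finset.mem_erase.2 ⟨?_, ?_⟩
      · intro hc
        apply habar
        rw [← G.bar_invol a, hc]
      · rw [hF]
        simp only [Finset.mem_filter, Finset.mem_univ, true_and]
        rw [G.tar_bar]
        exact (hstep a haA).1 htarA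
    · intro a _
      show G.bar (G.bar a) = a
      exact G.bar_invol a
  have := Finset.add_sum_erase F ω heF
  rw [hrest, hsum0, add_zero] at this
  exact this

def delete (G : FinGraph) (e : G.H) : FinGraph where
  V := G.V
  H := {h : G.H // h ≠ e ∧ h ≠ G.bar e}
  bar := fun h => ⟨G.bar h.1,
    fun hc => h.2.2 (by rw [← G.bar_invol h.1, hc]),
    fun hc => h.2.1 (G.bar_injective hc)⟩
  bar_invol := fun h => Subtype.ext (G.bar_invol h.1)
  bar_ne := fun h hc => G.bar_ne h.1 (congrArg Subtype.val hc)
  tar := fun h => G.tar h.1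

lemma delete_connected (e : G.H)
    (hA : ∀ v w : G.V, G.ReachIn {h | h ≠ e ∧ h ≠ G.bar e} v w) :
    (G.delete e).Connected := by
  intro v w
  have h := hA v w
  induction h with
  | refl => exact Relation.ReflTransGen.refl
  | tail _ hs ih =>
    rcases hs with ⟨f, hf, hsrc, htar⟩
    exact ih.tail ⟨⟨f, hf.1, hf.2⟩, Set.mem_univ _, hsrc, htar⟩

lemma delete_balanced {W : Type*} [AddCommGroup W] (e : G.H) (ω : G.H → W)
    (hω : G.IsBalanced ω) (h0 : ω e = 0) :
    (G.delete e).IsBalanced (fun h => ω h.1) := by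
  classical
  have hb0 : ω (G.bar e) = 0 := by rw [hω.1 e, h0, neg_zero]
  constructor
  · intro h
    exact hω.1 h.1
  · intro v
    calc ∑ h ∈ Finset.univ.filter (fun h : (G.delete e).H => (G.delete e).tar h = v), ω h.1
        = ∑ h : (G.delete e).H, if (G.delete e).tar h = v then ω h.1 else 0 := by
          rw [Finset.sum_filter]
      _ = ∑ h : (G.delete e).H, if G.tar h.1 = v then ω h.1 else 0 :=
          Finset.sum_congr rfl (fun h _ => if_congr Iff.rfl rfl rfl)
      _ = ∑ h ∈ Finset.univ.filter (fun h : G.H => h ≠ e ∧ h ≠ G.bar e),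
            (if G.tar h = v then ω h else 0) :=
          (Finset.sum_subtype (p := fun h : G.H => h ≠ e ∧ h ≠ G.bar e) _
            (by intro x; simp) (fun h => if G.tar h = v then ω h else 0)).symm
      _ = ∑ h : G.H, if G.tar h = v then ω h else 0 := by
          refine Finset.sum_subset (Finset.filter_subset _ _) ?_
          intro h _ hnot
          simp only [Finset.mem_filter, Finset.mem_univ, true_and, not_and_or, not_not] at hnot
          rcases hnot with rfl | rfl
          · simp [h0]
          · simp [hb0]
      _ = ∑ h ∈ Finset.univ.filter (fun h : G.H => G.tar h = v), ω h := by
          rw [Finset.sum_filter]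
      _ = 0 := by convert hω.2 v

end FinGraph

/-- a nonsingular balanced cocycle vanishes on a half-edge iff the
corresponding edge is separating. -/
theorem nonsingular_vanishes_iff_separating (G : FinGraph) (r : ℕ) (hconn : G.Connected)
    (hrank : G.HasRank r) (W : Type) [AddCommGroup W] [Module ℝ W]
    (ω : G.H → W) (hω : ω ∈ G.Omega W) (hns : G.Nonsingular ω r) :
    ∀ e : G.H, ω e = 0 ↔ G.IsSeparating e := by
  classical
  have hbal : G.IsBalanced ω := hω
  intro e
  constructor
  · intro h0
    by_contra hnsep
    have hA : ∀ v w : G.V, G.ReachIn {h | h ≠ e ∧ h ≠ G.bar e} v w := not_not.mp hnsep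
    have hconn' := G.delete_connected e hA
    have htb := (G.delete e).treebound hconn'
    have hr : Fintype.card G.H + 2 = 2 * (Fintype.card G.V + r) := hrank
    have hV' : Fintype.card (G.delete e).V = Fintype.card G.V :=
      Fintype.card_congr (Equiv.refl _)
    have hcard' : Fintype.card (G.delete e).H = Fintype.card G.H - 2 := by
      have h1 : Fintype.card (G.delete e).H
          = (Finset.univ.filter (fun h : G.H => h ≠ e ∧ h ≠ G.bar e)).card :=
        Fintype.card_subtype _
      have h2 : Finset.univ.filter (fun h : G.H => h ≠ e ∧ h ≠ G.bar e)
          = Finset.univ \ {e, G.bar e} := by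
        ext h
        simp [Finset.mem_sdiff, not_or]
      have h3 : ({e, G.bar e} : Finset G.H).card = 2 :=
        Finset.card_pair (Ne.symm (G.bar_ne e))
      rw [h1, h2, Finset.card_sdiff_of_subset (Finset.subset_univ _), h3, Finset.card_univ]
    have h2le : 2 ≤ Fintype.card G.H := by
      have : ({e, G.bar e} : Finset G.H).card ≤ Finset.univ.card :=
        Finset.card_le_card (Finset.subset_univ _)
      rwa [Finset.card_pair (Ne.symm (G.bar_ne e)), Finset.card_univ] at this
    rw [hV', hcard'] at htb
    have hr1 : 1 ≤ r := by omega
    have hrank' : (G.delete e).HasRank (r - 1) := by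
      show Fintype.card (G.delete e).H + 2 = 2 * (Fintype.card (G.delete e).V + (r - 1))
      rw [hcard', hV']
      omega
    have hbal' := G.delete_balanced e ω hbal h0
    have hsb := (G.delete e).spanbound hconn' (r - 1) hrank' _ hbal'
    have hspan : Submodule.span ℝ (Set.range ω)
        ≤ Submodule.span ℝ (Set.range (fun h : (G.delete e).H => ω h.1)) := by
      rw [Submodule.span_le]
      rintro x ⟨h, rfl⟩
      by_cases h1 : h = e
      · subst h1; rw [h0]; exact Submodule.zero_mem _
      by_cases h2 : h = G.bar e
      · subst h2; rw [hbal.1 e, h0, neg_zero]; exact Submodule.zero_mem _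
      · exact Submodule.subset_span ⟨⟨h, h1, h2⟩, rfl⟩
    haveI : FiniteDimensional ℝ
        (Submodule.span ℝ (Set.range (fun h : (G.delete e).H => ω h.1))) :=
      FiniteDimensional.span_of_finite ℝ (Set.finite_range _)
    have hmono := Submodule.finrank_mono hspan
    have hns' : Module.finrank ℝ ↥(Submodule.span ℝ (Set.range ω)) = r := hns
    omega
  · intro hsep
    exact G.separating_vanish hconn ω hbal e hsep
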